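/- For every rational number q > 0 there exists a sequence (f(n))_{n=1}^∞ of positive integers with lim_{n→∞} f(n) = ∞ such that ∑_{n=1}^∞ 1/∏_{i=1}^{f(n)} (n+i) = q. In particular, the series ∑_{n=1}^∞ 1/((n+1)(n+2)⋯(n+f(n))) can have a rational sum even though f(n) → ∞, giving a negative answer to the Erdős–Graham question. -/

import Mathlib

open Filter Finset

namespace EG

/-- product (m+1)(m+2)...(m+k) -/
def P (m k : ℕ) : ℕ := ∏ i ∈ Finset.Icc 1 k, (m + i)

lemma P_zero (m : ℕ) : P m 0 = 1 := by simp [P]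

lemma P_succ (m k : ℕ) : P m (k+1) = P m k * (m + (k+1)) := by
  unfold P
  rw [Finset.prod_Icc_succ_top (by omega)]

lemma P_one (m : ℕ) : P m 1 = m + 1 := by
  have := P_succ m 0
  rw [P_zero] at this
  simpa using this

lemma P_pos (m k : ℕ) : 0 < P m k := by
  apply Finset.prod_pos
  intro i hi
  have := (Finset.mem_Icc.mp hi).1
  omega

lemma P_shift (m k : ℕ) : P m (k+1) = (m+1) * P (m+1) k := by
  induction k with
  | zero => rw [P_one, P_zero]; ring
  | succ k ih =>
    rw [P_succ, ih, P_succ]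
    ring_nf

lemma P_ge (m k : ℕ) : m + k + 1 ≤ P m (k+1) := by
  induction k with
  | zero => rw [P_one]
  | succ k ih =>
    rw [P_succ]
    have h1 : 1 ≤ P m (k+1) := P_pos m (k+1)
    calc m + (k+1) + 1 ≤ P m (k+1) * (m + (k+1) + 1) := by nlinarith
    _ = P m (k+1) * (m + (k+1+1)) := by ring_nf

def t (m k : ℕ) : ℚ := 1 / (P m k : ℚ)

lemma Pq_pos (m k : ℕ) : (0:ℚ) < (P m k : ℚ) := by exact_mod_cast P_pos m k

lemma t_pos (m k : ℕ) : 0 < t m k := by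
  unfold t
  have := Pq_pos m k
  positivity

lemma t_succ (m k : ℕ) : t m k = ((m:ℚ) + k + 1) * t m (k+1) := by
  unfold t
  rw [P_succ]
  have h1 := Pq_pos m k
  push_cast
  rw [mul_comm]
  field_simp
  ring

lemma t_shift (m k : ℕ) : t (m+1) k = ((m:ℚ) + 1) * t m (k+1) := by
  unfold t
  rw [P_shift]
  have h1 := Pq_pos (m+1) k
  push_cast
  field_simp

lemma t_succ_le (m k : ℕ) : t m (k+1) ≤ t m k := by
  rw [t_succ m k]
  have := t_pos m (k+1)
  nlinarith

lemma t_succ_lt (m k : ℕ) (hm : 1 ≤ m) : t m (k+1) < t m k := by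
  rw [t_succ m k]
  have := t_pos m (k+1)
  have : (1:ℚ) ≤ (m:ℚ) := by exact_mod_cast hm
  nlinarith [t_pos m (k+1)]

lemma t_anti (m : ℕ) : ∀ {k k' : ℕ}, k ≤ k' → t m k' ≤ t m k := by
  intro k k' h
  induction k' with
  | zero => simp at h; simp [h]
  | succ k' ih =>
    rcases Nat.lt_or_ge k (k'+1) with h' | h'
    · exact le_trans (t_succ_le m k') (ih (by omega))
    · have : k = k' + 1 := by omega
      simp [this]

lemma t_one (m : ℕ) : t m 1 = 1 / ((m:ℚ)+1) := by
  unfold t; rw [P_one]; push_cast; ring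

lemma t_le_one_div (m k : ℕ) (hk : 1 ≤ k) : t m k ≤ 1/((m:ℚ)+1) := by
  have := t_anti m hk
  rw [t_one] at this
  exact this

lemma t_small (m k : ℕ) : t m (k+1) ≤ 1 / ((k:ℚ)+1) := by
  unfold t
  have h1 : ((k:ℚ)+1) ≤ (P m (k+1) : ℚ) := by
    have := P_ge m k
    have : ((m + k + 1 : ℕ) : ℚ) ≤ (P m (k+1) : ℚ) := by exact_mod_cast this
    push_cast at this ⊢
    linarith
  apply one_div_le_one_div_of_le (by positivity) h1

/-- tail sum of level (ℓ+1) terms from position m : `Tl ℓ m = ∑_{j≥m} t j (ℓ+1) = t m ℓ / ℓ`. -/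
def Tl (ℓ m : ℕ) : ℚ := t m ℓ / (ℓ:ℚ)

lemma Tl_pos {ℓ : ℕ} (hl : 1 ≤ ℓ) (m : ℕ) : 0 < Tl ℓ m := by
  unfold Tl
  have := t_pos m ℓ
  have : (0:ℚ) < (ℓ:ℚ) := by exact_mod_cast hl
  positivity

lemma Tl_step {ℓ : ℕ} (hl : 1 ≤ ℓ) (m : ℕ) : Tl ℓ m = t m (ℓ+1) + Tl ℓ (m+1) := by
  unfold Tl
  rw [t_succ m ℓ, t_shift m ℓ]
  have hz : ((ℓ:ℚ)) ≠ 0 := by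
    have : (0:ℚ) < (ℓ:ℚ) := by exact_mod_cast hl
    linarith
  field_simp
  ring

lemma t_lt_Tl {ℓ : ℕ} (hl : 1 ≤ ℓ) (m : ℕ) : t m (ℓ+1) < Tl ℓ m := by
  rw [Tl_step hl m]
  have := Tl_pos hl (m+1)
  linarith

lemma t_eq_Tl {ℓ : ℕ} (hl : 1 ≤ ℓ) (m : ℕ) : t m ℓ = (ℓ:ℚ) * Tl ℓ m := by
  unfold Tl
  have hz : ((ℓ:ℚ)) ≠ 0 := by
    have : (0:ℚ) < (ℓ:ℚ) := by exact_mod_cast hl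
    linarith
  field_simp

lemma Tl_le_t {ℓ : ℕ} (hl : 1 ≤ ℓ) (m : ℕ) : Tl ℓ m ≤ t m ℓ := by
  unfold Tl
  have h1 : (1:ℚ) ≤ (ℓ:ℚ) := by exact_mod_cast hl
  have := t_pos m ℓ
  rw [div_le_iff₀ (by linarith)]
  nlinarith

lemma Tl_le_bound {ℓ : ℕ} (hl : 1 ≤ ℓ) (m : ℕ) : Tl ℓ m ≤ 1/((m:ℚ)+1) :=
  le_trans (Tl_le_t hl m) (t_le_one_div m ℓ hl)

lemma Tl_succ_le_shift {ℓ : ℕ} (hl : 1 ≤ ℓ) (m : ℕ) : Tl (ℓ+1) m ≤ Tl ℓ (m+1) := by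
  unfold Tl
  rw [t_shift m ℓ]
  have hu := t_pos m (ℓ+1)
  have h1 : (1:ℚ) ≤ (ℓ:ℚ) := by exact_mod_cast hl
  rw [div_le_div_iff₀ (by push_cast; linarith) (by linarith)]
  push_cast
  have hm : (0:ℚ) ≤ (m:ℚ) := by positivity
  have key : (ℓ:ℚ) ≤ ((m:ℚ)+1)*((ℓ:ℚ)+1) := by nlinarith
  nlinarith [mul_le_mul_of_nonneg_left key hu.le]

lemma t_lt_Tl_shift {ℓ m : ℕ} (hl : 1 ≤ ℓ) (hm : ℓ < m + 1) : t m (ℓ+1) < Tl ℓ (m+1) := by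
  unfold Tl
  rw [t_shift m ℓ]
  have hu := t_pos m (ℓ+1)
  have h1 : (1:ℚ) ≤ (ℓ:ℚ) := by exact_mod_cast hl
  have h2 : (ℓ:ℚ) < (m:ℚ) + 1 := by exact_mod_cast hm
  rw [lt_div_iff₀ (by linarith)]
  nlinarith

/-! ### the greedy index -/

lemma exists_t_lt (m : ℕ) {r : ℚ} (hr : 0 < r) : ∃ k, t m (k+1) < r := by
  obtain ⟨K, hK⟩ := exists_nat_one_div_lt hr
  exact ⟨K, lt_of_le_of_lt (t_small m K) hK⟩

open scoped Classical in
noncomputable def kmin (m : ℕ) (r : ℚ) : ℕ :=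
  if h : ∃ k, t m (k+1) < r then Nat.find h + 1 else 1

lemma kmin_pos (m : ℕ) (r : ℚ) : 1 ≤ kmin m r := by
  unfold kmin
  split <;> omega

lemma kmin_spec (m : ℕ) {r : ℚ} (hr : 0 < r) : t m (kmin m r) < r := by
  have h := exists_t_lt m hr
  unfold kmin
  rw [dif_pos h]
  exact Nat.find_spec h

lemma kmin_min (m : ℕ) {r : ℚ} {j : ℕ} (h1 : 1 ≤ j) (h2 : j < kmin m r) : r ≤ t m j := by
  unfold kmin at h2
  split at h2
  · next h =>
    obtain ⟨j', rfl⟩ : ∃ j', j = j'+1 := ⟨j-1, by omega⟩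
    have := Nat.find_min h (show j' < Nat.find h by omega)
    exact not_lt.mp this
  · omega

lemma kmin_gt (m : ℕ) {r : ℚ} (hr : 0 < r) {j : ℕ} (h : r ≤ t m j) : j < kmin m r := by
  by_contra hc
  push_neg at hc
  have h2 := kmin_spec m hr
  have h3 := t_anti m hc
  linarith

lemma kmin_eq (m : ℕ) {r : ℚ} {K : ℕ} (hK : 1 ≤ K) (h1 : t m K < r)
    (h2 : ∀ j, 1 ≤ j → j < K → r ≤ t m j) : kmin m r = K := by
  have hr : 0 < r := lt_trans (t_pos m K) h1
  have hle : kmin m r ≤ K := by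
    have hex := exists_t_lt m hr
    unfold kmin
    rw [dif_pos hex]
    have : Nat.find hex ≤ K - 1 := Nat.find_le (by
      have : K - 1 + 1 = K := by omega
      rw [this]; exact h1)
    omega
  have hge : ¬ kmin m r < K := by
    intro h
    exact absurd (kmin_spec m hr) (not_lt.mpr (h2 _ (kmin_pos m r) h))
  omega

/-! ### the algorithm -/

noncomputable def choice (ℓ m : ℕ) (r : ℚ) : ℕ := if r = Tl ℓ m then ℓ + 2 else kmin m r

def lup (ℓ m : ℕ) (r' : ℚ) : ℕ :=
  if r' < Tl ℓ (m+1) ∧ (ℓ+1)^3 ≤ m + 1 then ℓ+1 else ℓ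

noncomputable def st (q : ℚ) : ℕ → ℚ × ℕ
  | 0 => (q, 1)
  | n+1 =>
    let s := st q n
    let r' := s.1 - t (n+1) (choice s.2 (n+1) s.1)
    (r', lup s.2 (n+1) r')

noncomputable def R (q : ℚ) (n : ℕ) : ℚ := (st q n).1
noncomputable def L (q : ℚ) (n : ℕ) : ℕ := (st q n).2
noncomputable def F (q : ℚ) (n : ℕ) : ℕ := choice (L q n) (n+1) (R q n)

lemma R_zero (q : ℚ) : R q 0 = q := rfl
lemma L_zero (q : ℚ) : L q 0 = 1 := rfl

lemma R_succ (q : ℚ) (n : ℕ) : R q (n+1) = R q n - t (n+1) (F q n) := rfl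

lemma L_succ (q : ℚ) (n : ℕ) : L q (n+1) = lup (L q n) (n+1) (R q (n+1)) := rfl

/-! ### invariants -/

structure Good (q : ℚ) (n : ℕ) : Prop where
  pos : 0 < R q n
  lge : 1 ≤ L q n
  lle : L q n ≤ n + 1
  inv : ∀ u, L q n = u + 2 → R q n < Tl (u+1) (n+1)

lemma good_zero {q : ℚ} (hq : 0 < q) : Good q 0 where
  pos := hq
  lge := le_refl 1
  lle := by simp [L_zero]
  inv := by intro u hu; rw [L_zero] at hu; omega

lemma term_lt {q : ℚ} {n : ℕ} (h : Good q n) : t (n+1) (F q n) < R q n := by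
  unfold F choice
  split
  · next hdet =>
    have hl := h.lge
    calc t (n+1) (L q n + 2) ≤ t (n+1) (L q n + 1) := t_succ_le _ _
    _ < Tl (L q n) (n+1) := t_lt_Tl hl _
    _ = R q n := hdet.symm
  · exact kmin_spec _ h.pos

lemma F_ge_L {q : ℚ} {n : ℕ} (h : Good q n) : L q n ≤ F q n := by
  unfold F choice
  split
  · omega
  · next hdet =>
    rcases Nat.lt_or_ge (L q n) 2 with h2 | h2
    · have := kmin_pos (n+1) (R q n)
      omega
    · obtain ⟨u, hu⟩ : ∃ u, L q n = u + 2 := ⟨L q n - 2, by omega⟩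
      have h3 : R q n < Tl (u+1) (n+1) := h.inv u hu
      have h4 : R q n ≤ t (n+1) (u+1) := le_of_lt (lt_of_lt_of_le h3 (Tl_le_t (by omega) _))
      have := kmin_gt (n+1) h.pos h4
      omega

lemma F_pos (q : ℚ) (n : ℕ) : 1 ≤ F q n := by
  unfold F choice
  split
  · omega
  · exact kmin_pos _ _

lemma lup_cases (q : ℚ) (n : ℕ) :
    (L q (n+1) = L q n ∧ ¬(R q (n+1) < Tl (L q n) (n+2) ∧ (L q n + 1)^3 ≤ n + 2)) ∨
    (L q (n+1) = L q n + 1 ∧ R q (n+1) < Tl (L q n) (n+2) ∧ (L q n + 1)^3 ≤ n + 2) := by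
  rw [L_succ]
  unfold lup
  split
  · next hc => right; exact ⟨rfl, hc⟩
  · next hc => left; exact ⟨rfl, hc⟩

lemma good_succ {q : ℚ} {n : ℕ} (h : Good q n) : Good q (n+1) := by
  have hpos : 0 < R q (n+1) := by
    rw [R_succ]
    have := term_lt h
    linarith
  rcases lup_cases q n with ⟨hf, hc⟩ | ⟨hf, hc1, hc2⟩
  · -- no fire
    refine ⟨hpos, ?_, ?_, ?_⟩
    · have := h.lge; omega
    · have := h.lle; omega
    · intro u hu
      rw [hf] at hu
      have hl : L q n = u + 2 := hu
      have hinv := h.inv u hl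
      have hu1 : (1:ℕ) ≤ u + 1 := by omega
      have hF : (F q n = L q n + 2 ∧ R q n = Tl (L q n) (n+1)) ∨ (F q n = kmin (n+1) (R q n) ∧ R q n ≠ Tl (L q n) (n+1)) := by
        unfold F choice
        split
        · next hd => left; exact ⟨rfl, hd⟩
        · next hd => right; exact ⟨rfl, hd⟩
      rcases hF with ⟨hd, hRn⟩ | ⟨hg, hne⟩
      · -- detection step
        have hlt : R q (n+1) < R q n := by
          rw [R_succ]
          have := t_pos (n+1) (F q n)
          linarith
        have : Tl (u+2) (n+1) ≤ Tl (u+1) (n+2) := Tl_succ_le_shift hu1 (n+1)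
        rw [hRn, hl] at hlt
        linarith
      · -- greedy step
        have hRle : R q n ≤ t (n+1) (u+1) := le_of_lt (lt_of_lt_of_le hinv (Tl_le_t hu1 _))
        have hkgt : u + 1 < kmin (n+1) (R q n) := kmin_gt (n+1) h.pos hRle
        rcases Nat.eq_or_lt_of_le hkgt with hke | hke
        · have hke' : kmin (n+1) (R q n) = u + 2 := hke.symm
          rw [R_succ, hg, hke']
          have := Tl_step hu1 (n+1)
          linarith
        · obtain ⟨v, hv⟩ : ∃ v, kmin (n+1) (R q n) = v + 1 := ⟨kmin (n+1) (R q n) - 1, by omega⟩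
          have hvge : u + 2 ≤ v := by omega
          have hRle2 : R q n ≤ t (n+1) v := by
            rw [hv] at hke
            exact kmin_min (n+1) (by omega) (by omega)
          have hRle3 : R q n ≤ t (n+1) (u+2) := le_trans hRle2 (t_anti _ hvge)
          have hlt : t (n+1) (u+2) < Tl (u+1) (n+2) := by
            have hmm : u + 1 < n + 1 + 1 := by
              have := h.lle; omega
            exact t_lt_Tl_shift hu1 hmm
          have hlt2 : R q (n+1) < R q n := by
            rw [R_succ]
            have := t_pos (n+1) (F q n)
            linarith
          linarith
  · -- fire
    refine ⟨hpos, by omega, ?_, ?_⟩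
    · have : L q n + 1 ≤ (L q n + 1)^3 := Nat.le_self_pow (by norm_num) _
      omega
    · intro u hu
      rw [hf] at hu
      have hl : L q n = u + 1 := by omega
      rw [hl] at hc1
      exact hc1

lemma good (q : ℚ) (hq : 0 < q) (n : ℕ) : Good q n := by
  induction n with
  | zero => exact good_zero hq
  | succ n ih => exact good_succ ih

lemma L_mono (q : ℚ) (n : ℕ) : L q n ≤ L q (n+1) := by
  rw [L_succ]; unfold lup; split <;> omega

lemma L_step (q : ℚ) (n : ℕ) : L q (n+1) ≤ L q n + 1 := by
  rw [L_succ]; unfold lup; split <;> omega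

lemma L_mono' (q : ℚ) : Monotone (L q) :=
  monotone_nat_of_le_succ (L_mono q)

lemma sum_t (q : ℚ) (a : ℕ) : ∀ d, ∑ j ∈ Finset.range d, t (a+j+1) (F q (a+j)) = R q a - R q (a+d) := by
  intro d
  induction d with
  | zero => simp
  | succ d ih =>
    rw [Finset.sum_range_succ, ih, show a + (d+1) = (a+d)+1 from rfl, R_succ]
    ring

lemma Tl_one (m : ℕ) : Tl 1 m = t m 1 := by
  unfold Tl; norm_num

lemma t_two_lt (m : ℕ) (hm : 1 ≤ m) : t m 2 < t (m+2) 1 := by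
  have h2 : P m 2 = (m+1) * (m+2) := by
    have h := P_succ m 1
    rw [P_one] at h
    norm_num at h
    exact h
  unfold t
  rw [P_one, h2]
  have hmq : (1:ℚ) ≤ (m:ℚ) := by exact_mod_cast hm
  rw [div_lt_div_iff₀ (by push_cast; nlinarith) (by push_cast; linarith)]
  push_cast
  nlinarith

/-- If the level is eventually constant `ℓ`, then beyond `max N (ℓ+1)^3` the
remainder never drops below the level-(ℓ+1) tail. -/
lemma stuck_key {q : ℚ} {ℓ N : ℕ} (hst : ∀ n, N ≤ n → L q n = ℓ) :
    ∀ n, N ≤ n → (ℓ+1)^3 ≤ n → Tl ℓ (n+2) ≤ R q (n+1) := by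
  intro n hn1 hn2
  rcases lup_cases q n with ⟨hf, hc⟩ | ⟨hf, hc1, hc2⟩
  · rw [hst n hn1] at hc
    by_contra hlt
    push_neg at hlt
    exact hc ⟨hlt, by omega⟩
  · exfalso
    have h1 := hst n hn1
    have h2 := hst (n+1) (by omega)
    omega

lemma stuck_one {q : ℚ} (hq : 0 < q) {N : ℕ} (hst : ∀ n, N ≤ n → L q n = 1) : False := by
  obtain ⟨M, hMN, hM8⟩ : ∃ M, N ≤ M ∧ 8 ≤ M := ⟨max N 8, le_max_left _ _, le_max_right _ _⟩
  have key : ∀ n, M ≤ n → Tl 1 (n+2) ≤ R q (n+1) := by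
    intro n hn
    exact stuck_key hst n (by omega) (by norm_num; omega)
  by_cases hA : ∃ n, M ≤ n ∧ R q (n+1) = Tl 1 (n+2)
  · -- the gadget fires and causes a level-up
    obtain ⟨n, hn, hR⟩ := hA
    have hL : L q (n+1) = 1 := hst (n+1) (by omega)
    have hRa : R q (n+1) = Tl 1 (n+1+1) := hR
    -- step n+1 : detection
    have hFa : F q (n+1) = 3 := by
      unfold F choice
      rw [hL, if_pos hRa]
    have hstep : Tl 1 (n+2) = t (n+2) 2 + Tl 1 (n+3) := Tl_step (le_refl 1) (n+2)
    have hepos : 0 < t (n+2) 2 - t (n+2) 3 := by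
      have := t_succ_lt (n+2) 2 (by omega)
      linarith
    have hRa1 : R q (n+2) = Tl 1 (n+3) + (t (n+2) 2 - t (n+2) 3) := by
      have h := R_succ q (n+1)
      rw [hFa, hRa] at h
      have : R q (n+2) = Tl 1 (n+2) - t (n+2) 3 := h
      rw [this, hstep]
      ring
    -- step n+2 : dip with k = 1
    have hL1 : L q (n+2) = 1 := hst (n+2) (by omega)
    have hne : R q (n+2) ≠ Tl 1 (n+3) := by
      rw [hRa1]; intro hcontra; linarith
    have hkm : kmin (n+3) (R q (n+2)) = 1 := by
      apply kmin_eq (n+3) (le_refl 1)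
      · rw [← Tl_one, hRa1]
        linarith
      · intro j hj1 hj2; omega
    have hFa1 : F q (n+2) = 1 := by
      unfold F choice
      rw [hL1, if_neg (by rw [show n+2+1 = n+3 from rfl]; exact hne), hkm]
    have hRa2 : R q (n+3) = t (n+2) 2 - t (n+2) 3 := by
      have h := R_succ q (n+2)
      rw [hFa1, hRa1] at h
      rw [show n+3 = n+2+1 from rfl, h, Tl_one]
      ring
    -- level-up fires at step n+2, contradiction
    have hlt : R q (n+3) < Tl 1 (n+4) := by
      have h1 : t (n+2) 2 - t (n+2) 3 < t (n+2) 2 := by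
        have := t_pos (n+2) 3
        linarith
      have h2 : t (n+2) 2 < t (n+4) 1 := t_two_lt (n+2) (by omega)
      have h3 : Tl 1 (n+4) = t (n+4) 1 := Tl_one _
      rw [hRa2, h3]
      linarith
    rcases lup_cases q (n+2) with ⟨hf, hc⟩ | ⟨hf, hc1, hc2⟩
    · rw [hL1] at hc
      push_neg at hc
      have := hc (by
        rw [show n+2+1 = n+3 from rfl, show n+2+2 = n+4 from rfl]
        exact hlt)
      omega
    · have := hst (n+3) (by omega)
      rw [hL1] at hf
      rw [show n+2+1 = n+3 from rfl] at hf
      omega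
  · -- no detection ever : pure harmonic descent, impossible
    push_neg at hA
    have hB : ∀ n, M ≤ n → Tl 1 (n+2) < R q (n+1) :=
      fun n hn => lt_of_le_of_ne (key n hn) (fun h => hA n hn h.symm)
    have hF1 : ∀ d : ℕ, F q (M+1+d) = 1 := by
      intro d
      have hL' : L q (M+1+d) = 1 := hst _ (by omega)
      have hB' : Tl 1 (M+1+d+1) < R q (M+1+d) := by
        have := hB (M+d) (by omega)
        rw [show M+d+2 = M+1+d+1 by omega, show M+d+1 = M+1+d by omega] at this
        exact this
      have hne : R q (M+1+d) ≠ Tl 1 (M+1+d+1) := ne_of_gt hB'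
      have hkm : kmin (M+1+d+1) (R q (M+1+d)) = 1 := by
        apply kmin_eq _ (le_refl 1)
        · rw [← Tl_one]; exact hB'
        · intro j hj1 hj2; omega
      unfold F choice
      rw [hL', if_neg hne, hkm]
    -- partial harmonic sums are bounded : contradiction
    have hbound : ∀ d : ℕ, ∑ j ∈ Finset.range d, t (M+1+j+1) 1 ≤ R q (M+1) := by
      intro d
      have h := sum_t q (M+1) d
      have hpos := (good q hq (M+1+d)).pos
      calc ∑ j ∈ Finset.range d, t (M+1+j+1) 1
          = ∑ j ∈ Finset.range d, t (M+1+j+1) (F q (M+1+j)) := by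
            apply Finset.sum_congr rfl
            intro j _
            rw [hF1 j]
      _ = R q (M+1) - R q (M+1+d) := h
      _ ≤ R q (M+1) := by linarith
    -- move to ℝ and contradict divergence of the harmonic series
    have hsum : Summable (fun j : ℕ => (1:ℝ) / ((j + (M+3) : ℕ) : ℝ)) := by
      apply summable_of_sum_range_le (c := ((R q (M+1) : ℚ) : ℝ))
      · intro j; positivity
      · intro d
        have hb := hbound d
        have hcast : ((∑ j ∈ Finset.range d, t (M+1+j+1) 1 : ℚ) : ℝ)
            = ∑ j ∈ Finset.range d, (1:ℝ) / ((j + (M+3) : ℕ) : ℝ) := by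
          push_cast
          apply Finset.sum_congr rfl
          intro j _
          rw [t_one]
          push_cast
          try ring
        rw [← hcast]
        exact_mod_cast hb
    have : Summable (fun n : ℕ => (1:ℝ) / (n : ℝ)) := by
      rw [← summable_nat_add_iff (M+3)]
      exact hsum
    exact Real.not_summable_one_div_natCast this

/-- main numeric inequality for the dip landing -/
lemma dip_nat {u c : ℕ} (hc : (u+3)^3 ≤ c) : (u+1)*(u+2)*(c+u+3) < c*(c+1) := by
  have h0 : (u+3)^2 < (u+3)^3 := Nat.pow_lt_pow_right (by omega) (by omega)
  have h1 : (u+3)^2 < c := lt_of_lt_of_le h0 hc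
  have hcpos : 0 < c := by omega
  have h2 : (u+1)*(u+2)*(c+u+3) ≤ (u+3)^2*c + (u+3)^3 := by nlinarith
  have h4 : (u+3)^2 * c < c * c := (Nat.mul_lt_mul_right hcpos).mpr h1
  have h5 : c*(c+1) = c*c + c := by ring
  linarith

/-- main numeric inequality for case B3 -/
lemma b3_nat {u c : ℕ} (hc : (u+3)^3 ≤ c) : (u+1)*(u+2)*(c+u+3) + (u+2)*c < c*(c+u+3) := by
  have h0 : (u+3)^2 < (u+3)^3 := Nat.pow_lt_pow_right (by omega) (by omega)
  have h1 : (u+3)^2 < c := lt_of_lt_of_le h0 hc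
  have hcpos : 0 < c := by omega
  have h2 : (u+1)*(u+2)*(c+u+3) ≤ (u+3)^2*c + (u+3)^3 := by nlinarith
  have h4 : (u+3)^2 * c < c * c := (Nat.mul_lt_mul_right hcpos).mpr h1
  have h5 : c*(c+u+3) = c*c + (u+3)*c := by ring
  have h6 : (u+2)*c + c = (u+3)*c := by ring
  linarith

lemma b3_key (u b : ℕ) (hb : (u+3)^3 ≤ b+2) :
    ((u:ℚ)+1) * t (b+1) (u+3) + t (b+2) (u+3) - Tl (u+2) (b+2) < 0 := by
  have hu2 : (1:ℕ) ≤ u + 2 := by omega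
  have hs1 : t (b+2) (u+2) = ((b+2:ℕ):ℚ) * t (b+1) (u+3) := by
    have h := t_shift (b+1) (u+2)
    rw [show b+1+1 = b+2 from rfl] at h
    push_cast at h ⊢
    linarith
  have hs2 : t (b+2) (u+2) = (((b+2:ℕ):ℚ)+(u:ℚ)+3) * t (b+2) (u+3) := by
    have h := t_succ (b+2) (u+2)
    push_cast at h ⊢
    linarith
  have hs3 : t (b+2) (u+2) = ((u:ℚ)+2) * Tl (u+2) (b+2) := by
    have h := t_eq_Tl hu2 (b+2)
    push_cast at h
    linarith
  have hnat : (u+1)*(u+2)*((b+2)+u+3) + (u+2)*(b+2) < (b+2)*((b+2)+u+3) := b3_nat hb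
  have hnatq : ((u:ℚ)+1)*((u:ℚ)+2)*(((b+2:ℕ):ℚ)+(u:ℚ)+3) + ((u:ℚ)+2)*((b+2:ℕ):ℚ)
      < ((b+2:ℕ):ℚ)*(((b+2:ℕ):ℚ)+(u:ℚ)+3) := by
    exact_mod_cast hnat
  have hYpos := t_pos (b+2) (u+2)
  have hcpos : (0:ℚ) < ((b+2:ℕ):ℚ) := by positivity
  have hcu : (0:ℚ) < ((b+2:ℕ):ℚ)+(u:ℚ)+3 := by positivity
  have hu2q : (0:ℚ) < (u:ℚ)+2 := by positivity
  have e1 : t (b+1) (u+3) * ((b+2:ℕ):ℚ) = t (b+2) (u+2) := by linarith [hs1]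
  have e2 : t (b+2) (u+3) * (((b+2:ℕ):ℚ)+(u:ℚ)+3) = t (b+2) (u+2) := by
    rw [mul_comm]; exact hs2.symm
  have e3 : Tl (u+2) (b+2) * ((u:ℚ)+2) = t (b+2) (u+2) := by
    rw [mul_comm]; exact hs3.symm
  have key : (((u:ℚ)+1) * t (b+1) (u+3) + t (b+2) (u+3) - Tl (u+2) (b+2))
      * (((u:ℚ)+2) * ((b+2:ℕ):ℚ) * (((b+2:ℕ):ℚ)+(u:ℚ)+3))
      = t (b+2) (u+2) * (((u:ℚ)+1)*((u:ℚ)+2)*(((b+2:ℕ):ℚ)+(u:ℚ)+3)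
          + ((u:ℚ)+2)*((b+2:ℕ):ℚ) - ((b+2:ℕ):ℚ)*(((b+2:ℕ):ℚ)+(u:ℚ)+3)) := by
    linear_combination (((u:ℚ)+1)*((u:ℚ)+2)*(((b+2:ℕ):ℚ)+(u:ℚ)+3)) * e1
      + (((u:ℚ)+2)*((b+2:ℕ):ℚ)) * e2 - (((b+2:ℕ):ℚ)*(((b+2:ℕ):ℚ)+(u:ℚ)+3)) * e3
  have hneg : (((u:ℚ)+1) * t (b+1) (u+3) + t (b+2) (u+3) - Tl (u+2) (b+2))
      * (((u:ℚ)+2) * ((b+2:ℕ):ℚ) * (((b+2:ℕ):ℚ)+(u:ℚ)+3)) < 0 := by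
    rw [key]
    apply mul_neg_of_pos_of_neg hYpos
    linarith
  nlinarith [hneg, mul_pos (mul_pos hu2q hcpos) hcu]

set_option maxHeartbeats 1000000 in
lemma stuck_big {q : ℚ} (hq : 0 < q) {u N : ℕ}
    (hst : ∀ n, N ≤ n → L q n = u + 2) : False := by
  obtain ⟨M, hMN, hMc⟩ : ∃ M, N ≤ M ∧ (u+3)^3 ≤ M :=
    ⟨max N ((u+3)^3), le_max_left _ _, le_max_right _ _⟩
  have hu1 : (1:ℕ) ≤ u + 1 := by omega
  have hu2 : (1:ℕ) ≤ u + 2 := by omega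
  have huq : (0:ℚ) ≤ (u:ℚ) := by positivity
  have key : ∀ n, M ≤ n → Tl (u+2) (n+2) ≤ R q (n+1) := by
    intro n hn
    exact stuck_key hst n (by omega) (by rw [show u+2+1 = u+3 from rfl]; omega)
  by_cases hA : ∃ n, M ≤ n ∧ R q (n+1) = Tl (u+2) (n+2)
  · -- CASE A : a detection happens; ride then dip, then a level-up fires
    obtain ⟨n, hn, hR⟩ := hA
    obtain ⟨a, haM, hLa, hRa⟩ :
        ∃ a, M + 1 ≤ a ∧ L q a = u+2 ∧ R q a = Tl (u+2) (a+1) :=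
      ⟨n+1, by omega, hst _ (by omega), hR⟩
    have hepos : 0 < t (a+1) (u+3) - t (a+1) (u+4) := by
      have := t_succ_lt (a+1) (u+3) (by omega)
      linarith
    set e : ℚ := t (a+1) (u+3) - t (a+1) (u+4) with he
    -- detection step at index a
    have hFa : F q a = u + 4 := by
      unfold F choice
      rw [hLa, if_pos hRa]
    have hbase : R q (a+1) = Tl (u+2) (a+2) + e := by
      have h := R_succ q a
      rw [hFa, hRa, Tl_step hu2 (a+1)] at h
      rw [h, he]
      ring
    -- the search for the dip moment
    have hex : ∃ d, ((u:ℚ)+1) * Tl (u+2) (a+2+d) < e := by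
      have hden : (0:ℚ) < e / ((u:ℚ)+1) := by positivity
      obtain ⟨K, hK⟩ := exists_nat_one_div_lt hden
      refine ⟨K, ?_⟩
      have h1 : Tl (u+2) (a+2+K) ≤ 1/((a+2+K:ℕ):ℚ) + 0 := by
        have := Tl_le_bound hu2 (a+2+K)
        have h2 : (1:ℚ)/(((a+2+K:ℕ):ℚ)+1) ≤ 1/((a+2+K:ℕ):ℚ) := by
          apply one_div_le_one_div_of_le
          · push_cast; positivity
          · linarith
        linarith
      have h3 : (1:ℚ)/((a+2+K:ℕ):ℚ) ≤ 1/((K:ℚ)+1) := by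
        apply one_div_le_one_div_of_le
        · positivity
        · push_cast; linarith
      have h4 : Tl (u+2) (a+2+K) < e / ((u:ℚ)+1) := by linarith
      have h5 : (0:ℚ) < (u:ℚ)+1 := by positivity
      calc ((u:ℚ)+1) * Tl (u+2) (a+2+K) < ((u:ℚ)+1) * (e / ((u:ℚ)+1)) := by
            exact mul_lt_mul_of_pos_left h4 h5
      _ = e := by field_simp
    obtain ⟨D, hDspec, hDmin⟩ :
        ∃ D, ((u:ℚ)+1) * Tl (u+2) (a+2+D) < e ∧
          ∀ j, j < D → e ≤ ((u:ℚ)+1) * Tl (u+2) (a+2+j) := by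
      refine ⟨Nat.find hex, Nat.find_spec hex, ?_⟩
      intro j hj
      exact not_lt.mp (Nat.find_min hex hj)
    have ride : ∀ d, d ≤ D → R q (a+1+d) = Tl (u+2) (a+2+d) + e := by
      intro d
      induction d with
      | zero => intro _; exact hbase
      | succ d ih =>
        intro hd
        have hih := ih (by omega)
        have hnot : e ≤ ((u:ℚ)+1) * Tl (u+2) (a+2+d) := hDmin d (by omega)
        have hLi : L q (a+1+d) = u+2 := hst _ (by omega)
        have hTlpos := Tl_pos hu2 (a+2+d)
        have hidx : a+1+d+1 = a+2+d := by omega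
        have hne : R q (a+1+d) ≠ Tl (u+2) (a+1+d+1) := by
          rw [hih, hidx]
          intro hco
          linarith
        have hkm : kmin (a+2+d) (R q (a+1+d)) = u+3 := by
          apply kmin_eq _ (by omega)
          · have h1 : t (a+2+d) (u+3) < Tl (u+2) (a+2+d) := t_lt_Tl hu2 (a+2+d)
            rw [hih]
            linarith
          · intro j hj1 hj2
            have hja : t (a+2+d) (u+2) ≤ t (a+2+d) j := t_anti _ (by omega)
            have htl : t (a+2+d) (u+2) = ((u:ℚ)+2) * Tl (u+2) (a+2+d) := by
              have h := t_eq_Tl hu2 (a+2+d)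
              push_cast at h
              linarith
            rw [hih]
            linarith
        have hFi : F q (a+1+d) = u+3 := by
          unfold F choice
          rw [hLi, if_neg hne, hidx, hkm]
        have h := R_succ q (a+1+d)
        rw [hFi, hih, hidx] at h
        have hstep : Tl (u+2) (a+2+d) = t (a+2+d) (u+3) + Tl (u+2) (a+2+d+1) :=
          Tl_step hu2 (a+2+d)
        have hidx2 : a+2+d+1 = a+2+(d+1) := by omega
        have hidx3 : a+1+(d+1) = a+2+d := by omega
        rw [hidx3, h, hstep, hidx2]
        ring
    -- the dip
    have hride := ride D (le_refl D)
    have hE : e ≤ ((u:ℚ)+1) * Tl (u+2) (a+1+D) := by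
      rcases Nat.eq_zero_or_pos D with h0 | hDpos
      · have h1 : e < t (a+1) (u+3) := by
          have := t_pos (a+1) (u+4)
          rw [he]; linarith
        have h2 : t (a+1) (u+3) < Tl (u+2) (a+1) := t_lt_Tl hu2 (a+1)
        have h3 := Tl_pos hu2 (a+1)
        rw [h0]
        nlinarith
      · obtain ⟨j, hj⟩ : ∃ j, D = j + 1 := ⟨D-1, by omega⟩
        have h := hDmin j (by omega)
        rw [show a+2+j = a+1+(j+1) by omega, ← hj] at h
        exact h
    have hTstep : Tl (u+2) (a+1+D) = t (a+1+D) (u+3) + Tl (u+2) (a+2+D) := by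
      have h := Tl_step hu2 (a+1+D)
      rw [show a+1+D+1 = a+2+D by omega] at h
      exact h
    have hLi : L q (a+1+D) = u+2 := hst _ (by omega)
    have hTlpos := Tl_pos hu2 (a+2+D)
    have hidx : a+1+D+1 = a+2+D := by omega
    have hne : R q (a+1+D) ≠ Tl (u+2) (a+1+D+1) := by
      rw [hride, hidx]
      intro hco
      have h0 : 0 < e := hepos
      linarith
    have htP : t (a+2+D) (u+2) = ((u:ℚ)+2) * Tl (u+2) (a+2+D) := by
      have h := t_eq_Tl hu2 (a+2+D)
      push_cast at h
      linarith
    have hshift : t (a+2+D) (u+2) = (((a+1+D:ℕ):ℚ)+1) * t (a+1+D) (u+3) := by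
      have h := t_shift (a+1+D) (u+2)
      rw [show a+1+D+1 = a+2+D by omega] at h
      exact h
    have hts : t (a+1+D) (u+3) ≤ t (a+2+D) (u+2) := by
      have h1 := t_pos (a+1+D) (u+3)
      have h2 : (1:ℚ) ≤ ((a+1+D:ℕ):ℚ)+1 := by
        have : (0:ℚ) ≤ ((a+1+D:ℕ):ℚ) := by positivity
        linarith
      nlinarith [hshift]
    have hkm : kmin (a+2+D) (R q (a+1+D)) = u+2 := by
      apply kmin_eq _ (by omega)
      · rw [hride, htP]
        linarith
      · intro j hj1 hj2
        have hja : t (a+2+D) (u+1) ≤ t (a+2+D) j := t_anti _ (by omega)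
        have htu1 : t (a+2+D) (u+1) = (((a+2+D:ℕ):ℚ)+(u:ℚ)+2) * t (a+2+D) (u+2) := by
          have h := t_succ (a+2+D) (u+1)
          push_cast at h ⊢
          linarith
        have hbig : (((u:ℚ))+2) ≤ ((a+2+D:ℕ):ℚ)+(u:ℚ)+2 := by
          push_cast
          linarith [show (0:ℚ) ≤ ((a:ℚ) + 2 + (D:ℚ)) by positivity]
        have htpos := t_pos (a+2+D) (u+2)
        -- R = Tl + e ≤ Tl + (u+1)*(t(a+1+D)(u+3) + Tl) = (u+2)Tl + (u+1)t(a+1+D)(u+3)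
        --   ≤ t(u+2) + (u+1)t(u+2) = (u+2) t(u+2) ≤ (a+2+D+u+2) t(u+2) = t(u+1) ≤ t j
        have hc1 : R q (a+1+D) ≤ ((u:ℚ)+2) * t (a+2+D) (u+2) := by
          rw [hride]
          have h1 : Tl (u+2) (a+2+D) + e ≤ ((u:ℚ)+2) * Tl (u+2) (a+2+D) + ((u:ℚ)+1) * t (a+1+D) (u+3) := by
            have := hE
            rw [hTstep] at this
            nlinarith
          have h2 : ((u:ℚ)+2) * Tl (u+2) (a+2+D) = t (a+2+D) (u+2) := htP.symm
          have h3 : ((u:ℚ)+1) * t (a+1+D) (u+3) ≤ ((u:ℚ)+1) * t (a+2+D) (u+2) := by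
            nlinarith [hts]
          nlinarith
        calc R q (a+1+D) ≤ ((u:ℚ)+2) * t (a+2+D) (u+2) := hc1
        _ ≤ (((a+2+D:ℕ):ℚ)+(u:ℚ)+2) * t (a+2+D) (u+2) := by nlinarith
        _ = t (a+2+D) (u+1) := htu1.symm
        _ ≤ t (a+2+D) j := hja
    have hFi : F q (a+1+D) = u+2 := by
      unfold F choice
      rw [hLi, if_neg hne, hidx, hkm]
    have hRdip : R q (a+2+D) = e - ((u:ℚ)+1) * Tl (u+2) (a+2+D) := by
      have h := R_succ q (a+1+D)
      rw [hFi, hride, hidx] at h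
      rw [h, htP]
      ring
    -- the level-up fires after the dip : contradiction with stuckness
    have hfire : R q (a+2+D) < Tl (u+2) (a+3+D) := by
      have h1 : R q (a+2+D) ≤ ((u:ℚ)+1) * t (a+1+D) (u+3) := by
        rw [hRdip]
        have := hE
        rw [hTstep] at this
        linarith
      -- nat inequality : (u+1)(u+2)(c+u+3) < c(c+1) with c = a+2+D
      have hPP : ((a+2+D) * (a+3+D)) * P (a+3+D) (u+2) = P (a+1+D) (u+3) * ((a+1+D)+(u+4)) := by
        have e1 : P (a+1+D) (u+4) = P (a+1+D) (u+3) * ((a+1+D) + (u+4)) := P_succ (a+1+D) (u+3)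
        have e2 : P (a+1+D) (u+4) = ((a+1+D)+1) * P ((a+1+D)+1) (u+3) := P_shift (a+1+D) (u+3)
        have e3 : P ((a+1+D)+1) (u+3) = (((a+1+D)+1)+1) * P (((a+1+D)+1)+1) (u+2) := P_shift ((a+1+D)+1) (u+2)
        rw [e3] at e2
        rw [e1] at e2
        rw [show (a+1+D)+1 = a+2+D by omega] at e2
        rw [show (a+2+D)+1 = a+3+D by omega] at e2
        rw [e2]
        ring
      have hnat : (u+1)*(u+2)*((a+2+D)+u+3) < (a+2+D)*((a+2+D)+1) := dip_nat (by omega)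
      -- conclude in ℚ
      have hq1 : (0:ℚ) < (P (a+1+D) (u+3) : ℚ) := Pq_pos _ _
      have hq2 : (0:ℚ) < (P (a+3+D) (u+2) : ℚ) := Pq_pos _ _
      have hq3 : (0:ℚ) < ((a+1+D:ℕ):ℚ) + (u:ℚ) + 4 := by positivity
      have hPPq : (((a+2+D:ℕ):ℚ) * ((a+3+D:ℕ):ℚ)) * (P (a+3+D) (u+2) : ℚ)
          = (P (a+1+D) (u+3) : ℚ) * (((a+1+D:ℕ):ℚ)+(u:ℚ)+4) := by
        exact_mod_cast congrArg (fun x : ℕ => (x:ℚ)) hPP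
      have hnatq : ((u:ℚ)+1)*((u:ℚ)+2)*(((a+2+D:ℕ):ℚ)+(u:ℚ)+3) < ((a+2+D:ℕ):ℚ)*(((a+2+D:ℕ):ℚ)+1) := by
        exact_mod_cast hnat
      -- target : (u+1) * t (a+1+D) (u+3) < Tl (u+2) (a+3+D)
      have hXpos := t_pos (a+1+D) (u+3)
      have hYpos := t_pos (a+3+D) (u+2)
      have m1 : t (a+1+D) (u+3) * (P (a+1+D) (u+3) : ℚ) = 1 := by
        unfold t; field_simp
      have m2 : t (a+3+D) (u+2) * (P (a+3+D) (u+2) : ℚ) = 1 := by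
        unfold t; field_simp
      have hkey : ((u:ℚ)+1)*((u:ℚ)+2)*(P (a+3+D) (u+2) : ℚ) < (P (a+1+D) (u+3) : ℚ) := by
        have hstep : ((u:ℚ)+1)*((u:ℚ)+2)*(P (a+3+D) (u+2):ℚ) * (((a+1+D:ℕ):ℚ)+(u:ℚ)+4)
            < (P (a+1+D) (u+3):ℚ) * (((a+1+D:ℕ):ℚ)+(u:ℚ)+4) := by
          have hcast1 : ((a+2+D:ℕ):ℚ)+(u:ℚ)+3 = ((a+1+D:ℕ):ℚ)+(u:ℚ)+4 := by push_cast; ring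
          have hcast2 : ((a+2+D:ℕ):ℚ)+1 = ((a+3+D:ℕ):ℚ) := by push_cast; ring
          have hmul := mul_lt_mul_of_pos_right hnatq hq2
          rw [hcast1, hcast2] at hmul
          nlinarith [hPPq]
        exact lt_of_mul_lt_mul_right hstep hq3.le
      have htarget : ((u:ℚ)+1) * t (a+1+D) (u+3) < Tl (u+2) (a+3+D) := by
        have hTl3 : Tl (u+2) (a+3+D) = t (a+3+D) (u+2) / ((u:ℚ)+2) := by
          unfold Tl; push_cast; ring
        have hXY := mul_lt_mul_of_pos_right hkey (mul_pos hXpos hYpos)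
        have e1 : ((u:ℚ)+1)*((u:ℚ)+2)*(P (a+3+D) (u+2):ℚ)*(t (a+1+D) (u+3) * t (a+3+D) (u+2))
            = ((u:ℚ)+1)*((u:ℚ)+2)*t (a+1+D) (u+3)*(t (a+3+D) (u+2) * (P (a+3+D) (u+2):ℚ)) := by
          ring
        have e2 : (P (a+1+D) (u+3):ℚ)*(t (a+1+D) (u+3) * t (a+3+D) (u+2))
            = (t (a+1+D) (u+3) * (P (a+1+D) (u+3):ℚ)) * t (a+3+D) (u+2) := by
          ring
        rw [e1, m2, e2, m1] at hXY
        rw [hTl3, lt_div_iff₀ (by positivity : (0:ℚ) < (u:ℚ)+2)]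
        nlinarith [hXY]
      linarith
    rcases lup_cases q (a+1+D) with ⟨hf, hc⟩ | ⟨hf, hc1, hc2⟩
    · rw [hLi] at hc
      exact hc ⟨by
        rw [show a+1+D+1 = a+2+D by omega, show a+1+D+2 = a+3+D by omega]
        exact hfire, by
        rw [show u+2+1 = u+3 from rfl]
        omega⟩
    · have h2 := hst (a+1+D+1) (by omega)
      rw [hLi] at hf
      omega
  · -- CASE B : the remainder stays strictly above the tail
    push_neg at hA
    have hB : ∀ n, M ≤ n → Tl (u+2) (n+2) < R q (n+1) :=
      fun n hn => lt_of_le_of_ne (key n hn) (fun h => hA n hn h.symm)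
    have hB' : ∀ n, M+1 ≤ n → Tl (u+2) (n+1) < R q n := by
      intro n hn
      have := hB (n-1) (by omega)
      rw [show n-1+2 = n+1 by omega, show n-1+1 = n by omega] at this
      exact this
    -- F takes only the values u+2 and u+3
    have fB : ∀ n, M+1 ≤ n → F q n = u+2 ∨ F q n = u+3 := by
      intro n hn
      have hLn : L q n = u+2 := hst _ (by omega)
      have hg := good q hq n
      have hinv := hg.inv u hLn
      have hne : R q n ≠ Tl (L q n) (n+1) := by
        rw [hLn]
        exact ne_of_gt (hB' n hn)
      have hkgelow : u+1 < kmin (n+1) (R q n) := by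
        apply kmin_gt (n+1) hg.pos
        exact le_of_lt (lt_of_lt_of_le hinv (Tl_le_t hu1 _))
      have hkup : kmin (n+1) (R q n) ≤ u+3 := by
        by_contra hcon
        push_neg at hcon
        have := kmin_min (n+1) (show 1 ≤ u+3 by omega) (show u+3 < kmin (n+1) (R q n) by omega)
        have h2 : t (n+1) (u+3) < Tl (u+2) (n+1) := by
          have := t_lt_Tl hu2 (n+1)
          rw [show u+2+1 = u+3 from rfl] at this
          exact this
        have h3 := hB' n hn
        linarith
      have : F q n = kmin (n+1) (R q n) := by
        unfold F choice
        rw [if_neg hne]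
      omega
    -- steps with F = u+3 preserve the excess above the tail
    have heta : ∀ n, F q n = u+3 →
        R q (n+1) - Tl (u+2) (n+2) = R q n - Tl (u+2) (n+1) := by
      intro n hFn
      have h := R_succ q n
      rw [hFn] at h
      have hstep : Tl (u+2) (n+1) = t (n+1) (u+3) + Tl (u+2) (n+2) := by
        have := Tl_step hu2 (n+1)
        rw [show u+2+1 = u+3 from rfl] at this
        exact this
      rw [h, hstep]
      ring
    -- steps with F = u+2 preserve the gap below the (u+1)-tail
    have hdelta : ∀ n, F q n = u+2 →
        Tl (u+1) (n+2) - R q (n+1) = Tl (u+1) (n+1) - R q n := by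
      intro n hFn
      have h := R_succ q n
      rw [hFn] at h
      have hstep : Tl (u+1) (n+1) = t (n+1) (u+2) + Tl (u+1) (n+2) := by
        have := Tl_step hu1 (n+1)
        rw [show u+1+1 = u+2 from rfl] at this
        exact this
      rw [h, hstep]
      ring
    by_cases hB1 : ∃ N2, M+1 ≤ N2 ∧ ∀ n, N2 ≤ n → F q n = u+3
    · -- B1 : eventually always u+3 : the constant excess contradicts R → 0
      obtain ⟨N2, hN2, hall⟩ := hB1
      have hind : ∀ d, R q (N2+d) - Tl (u+2) (N2+d+1) = R q N2 - Tl (u+2) (N2+1) := by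
        intro d
        induction d with
        | zero => rfl
        | succ d ih =>
          have := heta (N2+d) (hall _ (by omega))
          rw [show N2+(d+1) = N2+d+1 by omega]
          rw [show N2+d+1+1 = N2+d+2 by omega] at this ⊢
          rw [this, ih]
      have hpos : 0 < R q N2 - Tl (u+2) (N2+1) := by
        have := hB' N2 hN2
        linarith
      obtain ⟨K, hK⟩ := exists_nat_one_div_lt hpos
      have h1 : R q (N2+K) < 1/((K:ℚ)+1) := by
        have hg := good q hq (N2+K)
        have hLn : L q (N2+K) = u+2 := hst _ (by omega)
        have hinv := hg.inv u hLn
        have h2 : Tl (u+1) (N2+K+1) ≤ 1/(((N2+K+1:ℕ):ℚ)) := by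
          have hb := Tl_le_bound hu1 (N2+K+1)
          have h3 : (1:ℚ)/((((N2+K+1:ℕ)):ℚ)+1) ≤ 1/(((N2+K+1:ℕ)):ℚ) := by
            apply one_div_le_one_div_of_le
            · push_cast; positivity
            · linarith
          linarith
        have h4 : (1:ℚ)/(((N2+K+1:ℕ)):ℚ) ≤ 1/((K:ℚ)+1) := by
          apply one_div_le_one_div_of_le
          · positivity
          · push_cast; linarith
        linarith
      have h5 := hind K
      have h6 := Tl_pos hu2 (N2+K+1)
      linarith
    · by_cases hB2 : ∃ N2, M+1 ≤ N2 ∧ ∀ n, N2 ≤ n → F q n = u+2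
      · -- B2 : eventually always u+2 : constant gap contradicts tails → 0
        obtain ⟨N2, hN2, hall⟩ := hB2
        have hind : ∀ d, Tl (u+1) (N2+d+1) - R q (N2+d) = Tl (u+1) (N2+1) - R q N2 := by
          intro d
          induction d with
          | zero => rfl
          | succ d ih =>
            have := hdelta (N2+d) (hall _ (by omega))
            rw [show N2+(d+1) = N2+d+1 by omega]
            rw [show N2+d+1+1 = N2+d+2 by omega] at this ⊢
            rw [this, ih]
        have hg0 := good q hq N2
        have hLn0 : L q N2 = u+2 := hst _ (by omega)
        have hpos : 0 < Tl (u+1) (N2+1) - R q N2 := by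
          have := hg0.inv u hLn0
          linarith
        obtain ⟨K, hK⟩ := exists_nat_one_div_lt hpos
        have h1 : Tl (u+1) (N2+K+1) ≤ 1/(((N2+K+1:ℕ)):ℚ) := by
          have := Tl_le_bound hu1 (N2+K+1)
          have h3 : (1:ℚ)/((((N2+K+1:ℕ)):ℚ)+1) ≤ 1/(((N2+K+1:ℕ)):ℚ) := by
            apply one_div_le_one_div_of_le
            · push_cast; positivity
            · linarith
          linarith
        have h4 : (1:ℚ)/(((N2+K+1:ℕ)):ℚ) ≤ 1/((K:ℚ)+1) := by
          apply one_div_le_one_div_of_le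
          · positivity
          · push_cast; linarith
        have h5 := hind K
        have h6 : 0 < R q (N2+K) := (good q hq (N2+K)).pos
        linarith
      · -- B3 : a switch u+3 → u+2 happens late : contradiction via the gap estimate
        push_neg at hB1
        push_neg at hB2
        -- find a switch position b : F b = u+3, F (b+1) = u+2
        obtain ⟨b, hbM, hF3, hF2⟩ :
            ∃ b, M+1 ≤ b ∧ F q b = u+3 ∧ F q (b+1) = u+2 := by
          obtain ⟨n1, hn1ge, hn1⟩ := hB2 (M+1) (le_refl _)
          have hFn1 : F q n1 = u+3 := (fB n1 hn1ge).resolve_left hn1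
          obtain ⟨n2, hn2ge, hn2⟩ := hB1 (n1+1) (by omega)
          have hex2 : ∃ d, F q (n1+1+d) = u+2 := by
            refine ⟨n2 - (n1+1), ?_⟩
            rw [show n1+1+(n2-(n1+1)) = n2 by omega]
            exact (fB n2 (by omega)).resolve_right hn2
          obtain ⟨d0, hd0spec, hd0min⟩ :
              ∃ d0, F q (n1+1+d0) = u+2 ∧ ∀ j, j < d0 → F q (n1+1+j) ≠ u+2 :=
            ⟨Nat.find hex2, Nat.find_spec hex2, fun j hj => Nat.find_min hex2 hj⟩
          refine ⟨n1 + d0, by omega, ?_, ?_⟩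
          · rcases Nat.eq_zero_or_pos d0 with h0 | hp
            · rw [h0]; exact hFn1
            · obtain ⟨j, hj⟩ : ∃ j, d0 = j+1 := ⟨d0-1, by omega⟩
              have := hd0min j (by omega)
              have h2 := fB (n1+1+j) (by omega)
              rw [show n1+d0 = n1+1+j by omega]
              tauto
          · rw [show n1+d0+1 = n1+1+d0 by omega]
            exact hd0spec
        -- kmin at b is u+3, hence R b ≤ t (b+1) (u+2)
        have hgb := good q hq b
        have hkm3 : kmin (b+1) (R q b) = u+3 := by
          have : F q b = L q b + 2 ∨ F q b = kmin (b+1) (R q b) := by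
            unfold F choice
            split
            · left; rfl
            · right; rfl
          rcases this with h | h
          · rw [hst b (by omega)] at h
            omega
          · omega
        have hRb : R q b ≤ t (b+1) (u+2) :=
          kmin_min (b+1) (by omega) (by omega)
        -- the excess above the (u+3)-tail at b
        have ht1 : t (b+1) (u+2) = ((u:ℚ)+2) * Tl (u+2) (b+1) := by
          have h := t_eq_Tl hu2 (b+1)
          push_cast at h
          linarith
        have hηb : R q b - Tl (u+2) (b+1) ≤ ((u:ℚ)+1) * Tl (u+2) (b+1) := by
          rw [ht1] at hRb
          linarith
        have hη1 := heta b hF3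
        have hstep2 : R q (b+2) = R q (b+1) - t (b+2) (u+2) := by
          have h := R_succ q (b+1)
          rw [hF2] at h
          exact h
        have hTl1 : Tl (u+2) (b+1) = t (b+1) (u+3) + Tl (u+2) (b+2) := by
          have := Tl_step hu2 (b+1)
          rw [show u+2+1 = u+3 from rfl] at this
          exact this
        have hTl2 : Tl (u+2) (b+2) = t (b+2) (u+3) + Tl (u+2) (b+3) := by
          have := Tl_step hu2 (b+2)
          rw [show u+2+1 = u+3 from rfl] at this
          exact this
        have hs3 : t (b+2) (u+2) = ((u:ℚ)+2) * Tl (u+2) (b+2) := by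
          have h := t_eq_Tl hu2 (b+2)
          push_cast at h
          linarith
        have hBend := hB' (b+2) (by omega)
        rw [show b+2+1 = b+3 from rfl] at hBend
        -- the key numeric estimate
        have hfinal : ((u:ℚ)+1) * t (b+1) (u+3) + t (b+2) (u+3) - Tl (u+2) (b+2) < 0 :=
          b3_key u b (by omega)
        -- assemble the contradiction
        have hTl1' : ((u:ℚ)+1)*Tl (u+2) (b+1)
            = ((u:ℚ)+1)*t (b+1) (u+3) + ((u:ℚ)+1)*Tl (u+2) (b+2) := by
          rw [hTl1]; ring
        have hs3' : t (b+2) (u+2) = ((u:ℚ)+1)*Tl (u+2) (b+2) + Tl (u+2) (b+2) := by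
          rw [hs3]; ring
        linarith [hBend, hη1, hηb, hfinal, hstep2, hTl2, hTl1', hs3']

lemma not_stuck {q : ℚ} (hq : 0 < q) (ℓ N : ℕ) (hst : ∀ n, N ≤ n → L q n = ℓ) : False := by
  match ℓ, hst with
  | 0, hst =>
    have := (good q hq N).lge
    have := hst N (le_refl N)
    omega
  | 1, hst => exact stuck_one hq hst
  | (u+2), hst => exact stuck_big hq hst

lemma L_tendsto {q : ℚ} (hq : 0 < q) : Tendsto (L q) atTop atTop := by
  apply tendsto_atTop_atTop_of_monotone (L_mono' q)
  intro b
  by_contra hb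
  push_neg at hb
  have hbdd : BddAbove (Set.range (L q)) := by
    refine ⟨b, ?_⟩
    rintro x ⟨n, rfl⟩
    exact le_of_lt (hb n)
  have hne : (Set.range (L q)).Nonempty := ⟨L q 0, 0, rfl⟩
  have hmem := Nat.sSup_mem hne hbdd
  obtain ⟨N, hN⟩ := hmem
  apply not_stuck hq (sSup (Set.range (L q))) N
  intro n hn
  have h1 : L q n ≤ sSup (Set.range (L q)) := le_csSup hbdd ⟨n, rfl⟩
  have h2 : sSup (Set.range (L q)) = L q N := hN.symm
  have h3 : L q N ≤ L q n := L_mono' q hn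
  omega

lemma F_tendsto {q : ℚ} (hq : 0 < q) : Tendsto (F q) atTop atTop := by
  apply tendsto_atTop_mono (fun n => F_ge_L (good q hq n)) (L_tendsto hq)

lemma R_le_eventually {q : ℚ} (hq : 0 < q) :
    ∀ᶠ n in atTop, R q n ≤ 1/((n:ℚ)+1) := by
  have h2 := (L_tendsto hq).eventually_ge_atTop 2
  filter_upwards [h2] with n hn
  obtain ⟨u, hu⟩ : ∃ u, L q n = u + 2 := ⟨L q n - 2, by omega⟩
  have hinv := (good q hq n).inv u hu
  have hb : Tl (u+1) (n+1) ≤ 1/(((n+1:ℕ)):ℚ) + 0 := by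
    have hbb := Tl_le_bound (by omega : 1 ≤ u+1) (n+1)
    have h3 : (1:ℚ)/((((n+1:ℕ)):ℚ)+1) ≤ 1/(((n+1:ℕ)):ℚ) := by
      apply one_div_le_one_div_of_le
      · push_cast; positivity
      · linarith
    linarith
  have h4 : (1:ℚ)/(((n+1:ℕ)):ℚ) ≤ 1/((n:ℚ)+1) := by
    push_cast
    linarith [le_refl ((n:ℚ)+1)]
  linarith

lemma R_tendsto {q : ℚ} (hq : 0 < q) :
    Tendsto (fun n => ((R q n : ℚ) : ℝ)) atTop (nhds 0) := by
  refine tendsto_of_tendsto_of_tendsto_of_le_of_le'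
    (tendsto_const_nhds : Tendsto (fun _ : ℕ => (0:ℝ)) atTop (nhds 0))
    tendsto_one_div_add_atTop_nhds_zero_nat ?_ ?_
  · filter_upwards with n
    have := (good q hq n).pos
    have : (0:ℝ) ≤ ((R q n : ℚ):ℝ) := by positivity
    exact this
  · filter_upwards [R_le_eventually hq] with n hn
    have h1 : ((R q n : ℚ):ℝ) ≤ ((1/((n:ℚ)+1) : ℚ):ℝ) := by exact_mod_cast hn
    calc ((R q n : ℚ):ℝ) ≤ ((1/((n:ℚ)+1) : ℚ):ℝ) := h1
    _ = 1/((n:ℝ)+1) := by push_cast; ring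

lemma sum_t0 (q : ℚ) (n : ℕ) :
    ∑ j ∈ Finset.range n, t (j+1) (F q j) = q - R q n := by
  have h := sum_t q 0 n
  simp only [Nat.zero_add] at h
  rw [R_zero] at h
  exact h

end EG

open EG in
/-- For every positive rational `q` there is a sequence of positive integers `f` with
`f(n) → ∞` such that `∑_{n=1}^∞ 1/((n+1)(n+2)⋯(n+f(n))) = q`. -/
theorem stmt1 (q : ℚ) (hq : 0 < q) :
    ∃ f : ℕ → ℕ, (∀ n, 1 ≤ f n) ∧ Tendsto f atTop atTop ∧
      HasSum (fun n : ℕ =>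
        (1 : ℝ) / ((∏ i ∈ Finset.Icc 1 (f (n + 1)), (n + 1 + i) : ℕ) : ℝ)) (q : ℝ) := by
  classical
  refine ⟨fun n => Nat.casesOn n 1 (fun k => F q k), ?_, ?_, ?_⟩
  · intro n
    cases n with
    | zero => exact le_refl 1
    | succ k => exact F_pos q k
  · rw [show (fun n => Nat.casesOn n 1 (fun k => F q k) : ℕ → ℕ) = fun n => Nat.casesOn n 1 (fun k => F q k) from rfl]
    have h := F_tendsto hq
    rw [tendsto_atTop_atTop] at h ⊢
    intro b
    obtain ⟨N, hN⟩ := h b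
    exact ⟨N+1, fun n hn => by
      obtain ⟨k, rfl⟩ : ∃ k, n = k+1 := ⟨n-1, by omega⟩
      exact hN k (by omega)⟩
  · have hterm : (fun n : ℕ =>
        (1 : ℝ) / ((∏ i ∈ Finset.Icc 1 (F q n), (n + 1 + i) : ℕ) : ℝ))
        = fun n : ℕ => ((t (n+1) (F q n) : ℚ) : ℝ) := by
      funext n
      unfold t P
      push_cast
      ring
    show HasSum (fun n : ℕ =>
        (1 : ℝ) / ((∏ i ∈ Finset.Icc 1 (F q n), (n + 1 + i) : ℕ) : ℝ)) (q : ℝ)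
    rw [hterm]
    have hsummable : Summable (fun n : ℕ => ((t (n+1) (F q n) : ℚ) : ℝ)) := by
      apply summable_of_sum_range_le (c := (q:ℝ))
      · intro n
        have := t_pos (n+1) (F q n)
        positivity
      · intro n
        have h := sum_t0 q n
        have hpos := (good q hq n).pos
        have hcast : ∑ i ∈ Finset.range n, ((t (i+1) (F q i) : ℚ) : ℝ)
            = ((∑ i ∈ Finset.range n, t (i+1) (F q i) : ℚ) : ℝ) := by
          push_cast
          rfl
        rw [hcast, h]
        have : ((q - R q n : ℚ):ℝ) ≤ ((q:ℚ):ℝ) := by exact_mod_cast (by linarith : q - R q n ≤ q)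
        exact_mod_cast this
    rw [hsummable.hasSum_iff_tendsto_nat]
    have hps : (fun n : ℕ => ∑ i ∈ Finset.range n, ((t (i+1) (F q i) : ℚ) : ℝ))
        = fun n : ℕ => (q:ℝ) - ((R q n : ℚ):ℝ) := by
      funext n
      have h := sum_t0 q n
      have : ((∑ i ∈ Finset.range n, t (i+1) (F q i) : ℚ) : ℝ) = ((q - R q n : ℚ):ℝ) := by
        exact_mod_cast congrArg (fun x : ℚ => (x:ℝ)) h
      push_cast at this ⊢
      linarith [this]
    rw [hps]
    have := (R_tendsto hq).const_sub (q:ℝ)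
    simpa using this
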